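/- arXiv:1203.2040 — 2 statements merged into one kernel-verified Lean document; each statement's English description precedes it below -/
import Mathlib

section
/- Let Γ ⊂ P^n_K be a reduced non-degenerate finite set of points and let d(Γ)_a denote its higher minimum distances. If d(Γ)_b ≥ 2 for some integer b ≥ 1, then d(Γ)_a ≥ b − a + 2 for all integers a with 1 ≤ a ≤ b. -/
open MvPolynomial

noncomputable section

namespace PointsMinDist

variable {K : Type} [Field K]

/-- The (homogeneous) vanishing ideal of a set of points of projective space:
all polynomials vanishing at every representative vector of every point. -/
def vanishingIdeal {m : ℕ} (Γ : Set (Projectivization K (Fin m → K))) :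
    Ideal (MvPolynomial (Fin m) K) where
  carrier := {f | ∀ P ∈ Γ, ∀ (v : Fin m → K) (hv : v ≠ 0),
      Projectivization.mk K v hv = P → MvPolynomial.eval v f = 0}
  zero_mem' := by intro P hP v hv h; simp
  add_mem' := by
    intro f g hf hg P hP v hv h
    simp [hf P hP v hv h, hg P hP v hv h]
  smul_mem' := by
    intro c f hf P hP v hv h
    simp [smul_eq_mul, hf P hP v hv h]

/-- The degree-`d` graded component of a (homogeneous) ideal, as a `K`-subspace. -/
def degPart {m : ℕ} (I : Ideal (MvPolynomial (Fin m) K)) (d : ℕ) :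
    Submodule K (MvPolynomial (Fin m) K) :=
  Submodule.restrictScalars K I ⊓ homogeneousSubmodule (Fin m) K d

/-- `K`-dimension of the degree-`d` component of an ideal. -/
def hdim {m : ℕ} (I : Ideal (MvPolynomial (Fin m) K)) (d : ℕ) : ℕ :=
  Module.finrank K (degPart I d)

/-- Hilbert function of `R/I` in degree `d`. -/
def HF {m : ℕ} (I : Ideal (MvPolynomial (Fin m) K)) (d : ℕ) : ℕ :=
  Module.finrank K (homogeneousSubmodule (Fin m) K d) - hdim I d

open Classical in
/-- `hyp Γ`: the maximum number of points of `Γ` contained in a hyperplane. -/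
def hyp {m : ℕ} (Γ : Finset (Projectivization K (Fin m → K))) : ℕ :=
  sSup {k | ∃ φ : Module.Dual K (Fin m → K), φ ≠ 0 ∧
    k = (Γ.filter fun P => φ P.rep = 0).card}

/-- the minimum distance `d(Γ) = |Γ| - hyp(Γ)`. -/
def minDist {m : ℕ} (Γ : Finset (Projectivization K (Fin m → K))) : ℕ :=
  Γ.card - hyp Γ

/-- `Γ` is non-degenerate: it is not contained in any hyperplane. -/
def Nondeg {m : ℕ} (Γ : Finset (Projectivization K (Fin m → K))) : Prop :=
  ∀ φ : Module.Dual K (Fin m → K), (∀ P ∈ Γ, φ P.rep = 0) → φ = 0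

/-- The higher minimum distance `d(Γ)ₐ = |Γ| - max{|Γ'| : Γ' ⊆ Γ, dim I(Γ')ₐ > dim I(Γ)ₐ}`. -/
def higherD {m : ℕ} (Γ : Finset (Projectivization K (Fin m → K))) (a : ℕ) : ℕ :=
  Γ.card - sSup {k | ∃ Γ' ⊆ Γ,
    hdim (vanishingIdeal (Γ' : Set (Projectivization K (Fin m → K)))) a >
      hdim (vanishingIdeal (Γ : Set (Projectivization K (Fin m → K)))) a ∧ k = Γ'.card}

open Classical in
/-- The degree `δ(P)` of a point `P` in `Γ`: the least degree in which the ideal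
of `Γ \ {P}` is strictly bigger than the ideal of `Γ`. -/
def pointDegree {m : ℕ} (Γ : Finset (Projectivization K (Fin m → K)))
    (P : Projectivization K (Fin m → K)) : ℕ :=
  sInf {d | hdim (vanishingIdeal ((Γ.erase P) : Set (Projectivization K (Fin m → K)))) d >
    hdim (vanishingIdeal (Γ : Set (Projectivization K (Fin m → K)))) d}

/-- A graded minimal free resolution
`0 → F_len → ⋯ → F_1 → R → R/I → 0` of `R/I`, `R = K[x_0,…,x_{N-1}]`.
`F_j = ⊕_{i : Fin (rk j)} R(-(twist j i))` for `1 ≤ j ≤ len`.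
The differential `F_1 → R` is given by `gen` (so that its image is `I`) and the
differential `F_{j+2} → F_{j+1}` is given (in matrix form, rows indexed by the
target) by `mat j`.  All entries are homogeneous of the appropriate degrees, and
minimality means all entries lie in the irrelevant maximal ideal
(zero constant coefficient). -/
structure MinFreeRes (N : ℕ) (K : Type) [Field K] (I : Ideal (MvPolynomial (Fin N) K)) where
  len : ℕ
  rk : ℕ → ℕ
  twist : (j : ℕ) → Fin (rk j) → ℕ
  gen : Fin (rk 1) → MvPolynomial (Fin N) K
  mat : (j : ℕ) → Matrix (Fin (rk (j + 1))) (Fin (rk (j + 2))) (MvPolynomial (Fin N) K)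
  rk_len_pos : 0 < rk len
  rk_eq_zero : ∀ j, len < j → rk j = 0
  gen_hom : ∀ i, (gen i).IsHomogeneous (twist 1 i)
  gen_min : ∀ i, constantCoeff (gen i) = 0
  gen_span : Ideal.span (Set.range gen) = I
  mat_hom : ∀ j i i', mat j i i' = 0 ∨
    ∃ d, (mat j i i').IsHomogeneous d ∧ d + twist (j + 1) i = twist (j + 2) i'
  mat_min : ∀ j i i', constantCoeff (mat j i i') = 0
  exact_one : ∀ v : Fin (rk 1) → MvPolynomial (Fin N) K,
    (∑ i, v i * gen i = 0) ↔ v ∈ LinearMap.range (mat 0).mulVecLin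
  exact_rest : ∀ j, LinearMap.ker (mat j).mulVecLin = LinearMap.range (mat (j + 1)).mulVecLin

/-- `a(Γ)`: the minimal twist `min_i {a_i}` occurring in the last module
`F_len = ⊕ R(-a_i)` of the minimal free resolution. -/
def MinFreeRes.aMin {N : ℕ} {K : Type} [Field K] {I : Ideal (MvPolynomial (Fin N) K)}
    (res : MinFreeRes N K I) : ℕ :=
  Finset.univ.inf'
    (Finset.univ_nonempty_iff.mpr (Fin.pos_iff_nonempty.mp res.rk_len_pos))
    (fun i => res.twist res.len i)

/-- The minimum socle degree `A_n = min_i {a_i - n}` (here `n = len`, the length of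
the resolution). -/
def MinFreeRes.A {N : ℕ} {K : Type} [Field K] {I : Ideal (MvPolynomial (Fin N) K)}
    (res : MinFreeRes N K I) : ℤ :=
  (res.aMin : ℤ) - res.len


section Aux

variable {K : Type} [Field K] {m : ℕ}

lemma mem_vanishingIdeal {Γ : Set (Projectivization K (Fin m → K))}
    {f : MvPolynomial (Fin m) K} :
    f ∈ vanishingIdeal Γ ↔ ∀ P ∈ Γ, ∀ (v : Fin m → K) (hv : v ≠ 0),
      Projectivization.mk K v hv = P → MvPolynomial.eval v f = 0 := Iff.rfl

lemma vanishingIdeal_anti {Γ₁ Γ₂ : Set (Projectivization K (Fin m → K))} (h : Γ₁ ⊆ Γ₂) :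
    vanishingIdeal Γ₂ ≤ vanishingIdeal Γ₁ :=
  fun _ hf P hP v hv he => hf P (h hP) v hv he

lemma mem_degPart {I : Ideal (MvPolynomial (Fin m) K)} {d : ℕ} {f : MvPolynomial (Fin m) K} :
    f ∈ degPart I d ↔ f ∈ I ∧ f.IsHomogeneous d := by
  simp [degPart, Submodule.mem_inf, mem_homogeneousSubmodule]

lemma degPart_mono {I J : Ideal (MvPolynomial (Fin m) K)} (h : I ≤ J) (d : ℕ) :
    degPart I d ≤ degPart J d := by
  intro f hf
  rw [mem_degPart] at hf ⊢
  exact ⟨h hf.1, hf.2⟩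

instance fd_homogeneousSubmodule (d : ℕ) :
    FiniteDimensional K (homogeneousSubmodule (Fin m) K d) := by
  rw [homogeneousSubmodule_eq_finsupp_supported]
  have hfin : {e : Fin m →₀ ℕ | e.degree = d}.Finite := by
    apply Set.Finite.subset (Set.finite_Icc 0 (Finsupp.equivFunOnFinite.symm fun _ => d))
    intro e he
    simp only [Set.mem_Icc]
    refine ⟨zero_le, fun i => ?_⟩
    have := Finsupp.le_degree i e
    simp only [Set.mem_setOf_eq] at he
    simpa [he] using this
  haveI : Finite ↑{e : Fin m →₀ ℕ | e.degree = d} := hfin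
  haveI : FiniteDimensional K ({e : Fin m →₀ ℕ | e.degree = d} →₀ K) :=
    LinearEquiv.finiteDimensional (Finsupp.linearEquivFunOnFinite K K _).symm
  exact LinearEquiv.finiteDimensional (AddMonoidAlgebra.supportedEquivFinsupp _).symm

instance fd_degPart (I : Ideal (MvPolynomial (Fin m) K)) (d : ℕ) :
    FiniteDimensional K (degPart I d) :=
  Submodule.finiteDimensional_of_le (inf_le_right : degPart I d ≤ _)

lemma hdim_lt_of_degPart_lt {I J : Ideal (MvPolynomial (Fin m) K)} {d : ℕ}
    (h : degPart I d < degPart J d) : hdim I d < hdim J d :=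
  Submodule.finrank_lt_finrank_of_lt h

lemma exists_mem_not_mem_of_hdim_lt {I J : Ideal (MvPolynomial (Fin m) K)} {d : ℕ}
    (h : hdim I d < hdim J d) : ∃ f, f ∈ degPart J d ∧ f ∉ degPart I d := by
  by_contra hc
  push_neg at hc
  have hle : degPart J d ≤ degPart I d := fun f hf => hc f hf
  exact absurd (Submodule.finrank_mono hle) (not_le.mpr h)

/-- A linear functional as a degree-one polynomial. -/
def linForm (φ : Module.Dual K (Fin m → K)) : MvPolynomial (Fin m) K :=
  ∑ i, MvPolynomial.C (φ (Pi.single i 1)) * MvPolynomial.X i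

lemma linForm_isHomogeneous (φ : Module.Dual K (Fin m → K)) :
    (linForm φ).IsHomogeneous 1 := by
  apply MvPolynomial.IsHomogeneous.sum
  intro i _
  simpa using (MvPolynomial.isHomogeneous_C (Fin m) (φ (Pi.single i 1))).mul
    (MvPolynomial.isHomogeneous_X K i)

lemma eval_linForm (φ : Module.Dual K (Fin m → K)) (v : Fin m → K) :
    MvPolynomial.eval v (linForm φ) = φ v := by
  rw [LinearMap.pi_apply_eq_sum_univ φ v]
  simp only [linForm, map_sum, map_mul, MvPolynomial.eval_C, MvPolynomial.eval_X, smul_eq_mul]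
  refine Finset.sum_congr rfl fun i _ => ?_
  rw [mul_comm]
  congr 1
  congr 1
  funext j
  simp [Pi.single_apply, eq_comm]

end Aux

section Aux2

variable {K : Type} [Field K] {m : ℕ}

lemma dual_eval_eq_zero_of_mk_eq {P : Projectivization K (Fin m → K)}
    {φ : Module.Dual K (Fin m → K)} (hP : φ P.rep = 0) {v : Fin m → K} {hv : v ≠ 0}
    (he : Projectivization.mk K v hv = P) : φ v = 0 := by
  rw [← Projectivization.mk_rep P, Projectivization.mk_eq_mk_iff] at he
  obtain ⟨c, hc⟩ := he
  rw [← hc, Units.smul_def, map_smul, hP, smul_zero]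

lemma degPart_lt {I J : Ideal (MvPolynomial (Fin m) K)} {d : ℕ}
    (hle : degPart I d ≤ degPart J d) {g : MvPolynomial (Fin m) K}
    (hgJ : g ∈ degPart J d) (hgI : g ∉ degPart I d) : degPart I d < degPart J d :=
  lt_of_le_of_ne hle (fun h => hgI (h ▸ hgJ))

lemma key_step [DecidableEq (Projectivization K (Fin m → K))] {Γ Γ' : Finset (Projectivization K (Fin m → K))} (hsub : Γ' ⊆ Γ) {a : ℕ}
    (h : hdim (vanishingIdeal (Γ : Set (Projectivization K (Fin m → K)))) a <
      hdim (vanishingIdeal (Γ' : Set (Projectivization K (Fin m → K)))) a) :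
    (hdim (vanishingIdeal (Γ : Set (Projectivization K (Fin m → K)))) (a+1) <
      hdim (vanishingIdeal (Γ' : Set (Projectivization K (Fin m → K)))) (a+1)) ∧
    (Γ'.card + 2 ≤ Γ.card → ∃ P ∈ Γ, P ∉ Γ' ∧
      hdim (vanishingIdeal (Γ : Set (Projectivization K (Fin m → K)))) (a+1) <
        hdim (vanishingIdeal ((insert P Γ' : Finset (Projectivization K (Fin m → K))) :
          Set (Projectivization K (Fin m → K)))) (a+1)) := by
  obtain ⟨f, hfJ, hfI⟩ := exists_mem_not_mem_of_hdim_lt h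
  rw [mem_degPart] at hfJ
  obtain ⟨hfI', hfhom⟩ := hfJ
  have hfnot : f ∉ vanishingIdeal (Γ : Set (Projectivization K (Fin m → K))) :=
    fun hf => hfI (mem_degPart.mpr ⟨hf, hfhom⟩)
  rw [mem_vanishingIdeal] at hfnot
  push_neg at hfnot
  obtain ⟨Q, hQΓ, v, hv, hmk, hne⟩ := hfnot
  constructor
  · -- weak step
    obtain ⟨i, hi⟩ := Function.ne_iff.mp hv
    apply hdim_lt_of_degPart_lt
    refine degPart_lt (degPart_mono (vanishingIdeal_anti (by exact_mod_cast hsub)) _)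
      (g := f * MvPolynomial.X i) ?_ ?_
    · exact mem_degPart.mpr ⟨Ideal.mul_mem_right _ _ hfI',
        hfhom.mul (MvPolynomial.isHomogeneous_X K i)⟩
    · intro hmem
      have := (mem_degPart.mp hmem).1 Q hQΓ v hv hmk
      rw [map_mul, MvPolynomial.eval_X] at this
      exact (mul_ne_zero hne (by simpa using hi)) this
  · intro hcard
    have hQ' : Q ∉ Γ' := fun hmem => hne (hfI' Q (Finset.mem_coe.mpr hmem) v hv hmk)
    have h2 : 1 < (Γ \ Γ').card := by
      rw [Finset.card_sdiff_of_subset hsub]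
      have := Finset.card_le_card hsub
      omega
    obtain ⟨P, hPmem, hPQ⟩ := Finset.exists_mem_ne h2 Q
    rw [Finset.mem_sdiff] at hPmem
    obtain ⟨hP1, hP2⟩ := hPmem
    have hvnot : v ∉ Submodule.span K {P.rep} := by
      intro hvmem
      rw [Submodule.mem_span_singleton] at hvmem
      obtain ⟨c, hc⟩ := hvmem
      have hc0 : c ≠ 0 := fun h => hv (by rw [← hc, h, zero_smul])
      have : Projectivization.mk K v hv = P := by
        conv_rhs => rw [← Projectivization.mk_rep P]
        rw [Projectivization.mk_eq_mk_iff]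
        exact ⟨Units.mk0 c hc0, by rwa [Units.smul_def]⟩
      exact hPQ (this ▸ hmk ▸ rfl)
    obtain ⟨φ, hφv, hφmap⟩ := Submodule.exists_dual_map_eq_bot_of_notMem hvnot inferInstance
    have hφP : φ P.rep = 0 := by
      have hmm : φ P.rep ∈ Submodule.map φ (Submodule.span K {P.rep}) :=
        Submodule.mem_map_of_mem (Submodule.mem_span_singleton_self _)
      rw [hφmap] at hmm
      simpa using hmm
    refine ⟨P, hP1, hP2, ?_⟩
    apply hdim_lt_of_degPart_lt
    have hsub' : (insert P Γ' : Finset (Projectivization K (Fin m → K))) ⊆ Γ :=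
      Finset.insert_subset hP1 hsub
    refine degPart_lt (degPart_mono (vanishingIdeal_anti (by exact_mod_cast hsub')) _)
      (g := f * linForm φ) ?_ ?_
    · refine mem_degPart.mpr ⟨?_, hfhom.mul (linForm_isHomogeneous φ)⟩
      intro R hR v' hv' he'
      rw [Finset.coe_insert, Set.mem_insert_iff] at hR
      rw [map_mul]
      rcases hR with rfl | hR
      · rw [eval_linForm, dual_eval_eq_zero_of_mk_eq hφP he', mul_zero]
      · rw [hfI' R hR v' hv' he', zero_mul]
    · intro hmem
      have := (mem_degPart.mp hmem).1 Q hQΓ v hv hmk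
      rw [map_mul, eval_linForm] at this
      exact (mul_ne_zero hne hφv) this

lemma empty_hdim_lt {Γ : Finset (Projectivization K (Fin m → K))} (hΓ : Γ.Nonempty) (a : ℕ) :
    hdim (vanishingIdeal (Γ : Set (Projectivization K (Fin m → K)))) a <
      hdim (vanishingIdeal ((∅ : Finset (Projectivization K (Fin m → K))) :
        Set (Projectivization K (Fin m → K)))) a := by
  obtain ⟨P, hP⟩ := hΓ
  obtain ⟨i, hi⟩ := Function.ne_iff.mp P.rep_nonzero
  have hi' : P.rep i ≠ 0 := by simpa using hi
  apply hdim_lt_of_degPart_lt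
  refine degPart_lt (degPart_mono (vanishingIdeal_anti (by simp)) _)
    (g := MvPolynomial.X i ^ a) ?_ ?_
  · refine mem_degPart.mpr ⟨?_, by simpa using (MvPolynomial.isHomogeneous_X K i).pow a⟩
    intro R hR
    simp at hR
  · intro hmem
    have := (mem_degPart.mp hmem).1 P (Finset.mem_coe.mpr hP) P.rep P.rep_nonzero
      (Projectivization.mk_rep P)
    rw [map_pow, MvPolynomial.eval_X] at this
    exact hi' (pow_eq_zero_iff'.mp this).1

end Aux2

/-- If `d(Γ)_b ≥ 2` for some `b ≥ 1`, then
`d(Γ)_a ≥ b - a + 2` for all `1 ≤ a ≤ b`. -/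
theorem higherD_ge_of_two_le
    {K : Type} [Field K] [CharZero K] {n : ℕ}
    (Γ : Finset (Projectivization K (Fin (n + 1) → K)))
    (hnd : Nondeg Γ)
    {b : ℕ} (hb : 1 ≤ b) (hd : 2 ≤ higherD Γ b) :
    ∀ a, 1 ≤ a → a ≤ b → b - a + 2 ≤ higherD Γ a := by
  haveI := Classical.decEq (Projectivization K (Fin (n+1) → K))
  let S : ℕ → Set ℕ := fun a => {k | ∃ Γ' ⊆ Γ,
    hdim (vanishingIdeal (Γ' : Set (Projectivization K (Fin (n+1) → K)))) a >
      hdim (vanishingIdeal (Γ : Set (Projectivization K (Fin (n+1) → K)))) a ∧ k = Γ'.card}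
  have hhd : ∀ a, higherD Γ a = Γ.card - sSup (S a) := fun _ => rfl
  have hΓ2 : 2 ≤ Γ.card := le_trans hd (Nat.sub_le _ _)
  have hΓne : Γ.Nonempty := Finset.card_pos.mp (by omega)
  have hbdd : ∀ a, BddAbove (S a) := fun a =>
    ⟨Γ.card, by rintro k ⟨Γ', hs, -, rfl⟩; exact Finset.card_le_card hs⟩
  have hne : ∀ a, (S a).Nonempty := fun a =>
    ⟨0, ∅, Finset.empty_subset _, empty_hdim_lt hΓne a, Finset.card_empty.symm⟩
  have hsup_le : ∀ a, sSup (S a) ≤ Γ.card := fun a =>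
    csSup_le (hne a) (by rintro k ⟨Γ', hs, -, rfl⟩; exact Finset.card_le_card hs)
  have hmem : ∀ a, sSup (S a) ∈ S a := fun a => Nat.sSup_mem (hne a) (hbdd a)
  have key : ∀ k a, a + k = b → k + 2 ≤ Γ.card - sSup (S a) := by
    intro k
    induction k with
    | zero =>
      intro a ha
      have hab : a = b := by omega
      subst hab
      have := hd
      rw [hhd a] at this
      omega
    | succ k ih =>
      intro a ha
      have IH := ih (a+1) (by omega)
      have hupper := hsup_le (a+1)
      obtain ⟨Γ', hsub, hstrict, hcardeq⟩ := hmem a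
      have hweak : sSup (S a) ∈ S (a+1) := ⟨Γ', hsub, (key_step hsub hstrict).1, hcardeq⟩
      have hle1 : sSup (S a) ≤ sSup (S (a+1)) := le_csSup (hbdd (a+1)) hweak
      have hroom : Γ'.card + 2 ≤ Γ.card := by omega
      obtain ⟨P, hPΓ, hPΓ', hstrict'⟩ := (key_step hsub hstrict).2 hroom
      have hmem' : Γ'.card + 1 ∈ S (a+1) := ⟨insert P Γ', Finset.insert_subset hPΓ hsub,
        hstrict', (Finset.card_insert_of_notMem hPΓ').symm⟩
      have hle2 : Γ'.card + 1 ≤ sSup (S (a+1)) := le_csSup (hbdd (a+1)) hmem'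
      omega
  intro a ha1 hab
  have hk := key (b - a) a (by omega)
  rw [hhd a]
  omega


end PointsMinDist
end
end

section
/- Let Γ ⊂ P^n_K (n ≥ 2) be a reduced set of m points consisting of m−1 points lying in a single hyperplane together with one point outside that hyperplane, where the m−1 points do not all lie in a codimension-2 linear subspace (so Γ is non-degenerate). Then d(Γ) = 1, a(Γ) = n + 1, and hence d(Γ) = A_n. -/
open MvPolynomial

noncomputable section

namespace PointsMinDist

variable {K : Type} [Field K]

/-! ### Auxiliary lemmas -/

section Aux

open Finset

/-- Koszul sign. -/
def sgn (K : Type) [Field K] {N : ℕ} (k : Fin N) (T : Finset (Fin N)) : K :=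
  (-1 : K) ^ ((T.filter (fun t => t < k)).card)

variable {N : ℕ}

lemma sgn_ne_zero (k : Fin N) (T : Finset (Fin N)) : sgn K k T ≠ 0 :=
  pow_ne_zero _ (neg_ne_zero.mpr one_ne_zero)

lemma filter_insert_card {k : Fin N} (l : Fin N) (T : Finset (Fin N)) (hk : k ∉ T) :
    ((insert k T).filter (fun t => t < l)).card
      = (T.filter (fun t => t < l)).card + (if k < l then 1 else 0) := by
  rw [Finset.filter_insert]
  split_ifs with h
  · rw [Finset.card_insert_of_notMem (by simp [hk])]
  · simp

lemma sgn_anticomm {k l : Fin N} (T : Finset (Fin N)) (hk : k ∉ T) (hl : l ∉ T)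
    (hkl : k ≠ l) :
    sgn K k T * sgn K l (insert k T) = -(sgn K l T * sgn K k (insert l T)) := by
  unfold sgn
  rw [filter_insert_card l T hk, filter_insert_card k T hl]
  rcases lt_or_gt_of_ne hkl with h | h
  · rw [if_pos h, if_neg (not_lt_of_gt h)]
    rw [pow_add, pow_add]
    ring
  · rw [if_neg (not_lt_of_gt h), if_pos h]
    rw [pow_add, pow_add]
    ring

/-- Koszul-type differential on functions from finsets to polynomials. -/
def Dop {K : Type} [Field K] {N : ℕ} (c : Finset (Fin N) → MvPolynomial (Fin N) K) :
    Finset (Fin N) → MvPolynomial (Fin N) K :=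
  fun T => ∑ k ∈ Tᶜ, C (sgn K k T) * (X k * c (insert k T))

lemma sum_antisym [CharZero K]
    (A : Finset (Fin N)) (f : Fin N → Fin N → MvPolynomial (Fin N) K)
    (hf : ∀ k ∈ A, ∀ l ∈ A, k ≠ l → f k l = -f l k) :
    ∑ k ∈ A, ∑ l ∈ A.erase k, f k l = 0 := by
  set g : Fin N → Fin N → MvPolynomial (Fin N) K :=
    fun k l => if l = k then 0 else f k l with hg
  have key : ∀ k ∈ A, ∑ l ∈ A.erase k, f k l = ∑ l ∈ A, g k l := by
    intro k hk
    rw [hg]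
    simp only []
    rw [Finset.sum_ite, Finset.sum_const_zero, zero_add]
    apply Finset.sum_congr
    · ext l; simp [Finset.mem_erase, Finset.mem_filter, and_comm]
    · intros; rfl
  rw [Finset.sum_congr rfl key]
  set S := ∑ k ∈ A, ∑ l ∈ A, g k l with hS
  have hskew : S = -S := by
    rw [hS]
    conv_lhs => rw [Finset.sum_comm]
    rw [← Finset.sum_neg_distrib]
    apply Finset.sum_congr rfl; intro k hk
    rw [← Finset.sum_neg_distrib]
    apply Finset.sum_congr rfl; intro l hl
    by_cases h : l = k
    · subst h; simp [hg]
    · have h' : ¬ k = l := fun hh => h hh.symm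
      rw [hg]; simp only []
      rw [if_neg h', if_neg h, hf l hl k hk h]
  have h2 : (2 : MvPolynomial (Fin N) K) * S = 0 := by
    linear_combination S + hskew
  rcases mul_eq_zero.mp h2 with h | h
  · exact absurd h two_ne_zero
  · exact h

/-- d ∘ d = 0 for the Koszul differential. -/
lemma Dop_Dop [CharZero K] (c : Finset (Fin N) → MvPolynomial (Fin N) K)
    (T : Finset (Fin N)) : Dop (Dop c) T = 0 := by
  unfold Dop
  have expand : ∑ k ∈ Tᶜ, C (sgn K k T) *
      (X k * ∑ l ∈ (insert k T)ᶜ, C (sgn K l (insert k T)) * (X l * c (insert l (insert k T))))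
      = ∑ k ∈ Tᶜ, ∑ l ∈ Tᶜ.erase k,
        (C (sgn K k T) * C (sgn K l (insert k T))) * (X k * X l * c (insert l (insert k T))) := by
    apply Finset.sum_congr rfl
    intro k hk
    rw [Finset.mul_sum, Finset.compl_insert, Finset.mul_sum]
    apply Finset.sum_congr rfl
    intro l hl
    ring
  rw [expand]
  apply sum_antisym
  intro k hk l hl hkl
  have hk' : k ∉ T := by simpa using hk
  have hl' : l ∉ T := by simpa using hl
  rw [← C_mul, ← C_mul, sgn_anticomm T hk' hl' hkl, Finset.insert_comm]
  push_cast [map_neg]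
  ring

lemma Dop_congr {c₁ c₂ : Finset (Fin N) → MvPolynomial (Fin N) K} (T : Finset (Fin N))
    (h : ∀ k ∈ Tᶜ, c₁ (insert k T) = c₂ (insert k T)) : Dop c₁ T = Dop c₂ T := by
  unfold Dop
  exact Finset.sum_congr rfl fun k hk => by rw [h k hk]

lemma Dop_linear {ι : Type} [Fintype ι] (A : ι → MvPolynomial (Fin N) K)
    (c : ι → Finset (Fin N) → MvPolynomial (Fin N) K) (T : Finset (Fin N)) :
    ∑ i, A i * Dop (c i) T = Dop (fun S => ∑ i, A i * c i S) T := by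
  unfold Dop
  calc ∑ i, A i * ∑ k ∈ Tᶜ, C (sgn K k T) * (X k * c i (insert k T))
      = ∑ i, ∑ k ∈ Tᶜ, A i * (C (sgn K k T) * (X k * c i (insert k T))) := by
        exact Finset.sum_congr rfl fun i _ => Finset.mul_sum _ _ _
    _ = ∑ k ∈ Tᶜ, ∑ i, A i * (C (sgn K k T) * (X k * c i (insert k T))) := Finset.sum_comm
    _ = ∑ k ∈ Tᶜ, C (sgn K k T) * (X k * ∑ i, A i * c i (insert k T)) := by
        apply Finset.sum_congr rfl
        intro k _
        rw [Finset.mul_sum, Finset.mul_sum]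
        apply Finset.sum_congr rfl
        intro i _
        ring

lemma Dop_homog_one (c : Finset (Fin N) → K) (T : Finset (Fin N)) :
    (Dop (fun S => C (c S) : Finset (Fin N) → MvPolynomial (Fin N) K) T).IsHomogeneous 1 := by
  apply IsHomogeneous.sum
  intro k _
  have : (C (sgn K k T) * (X k * C (c (insert k T))) : MvPolynomial (Fin N) K).IsHomogeneous
      (0 + (1 + 0)) :=
    (isHomogeneous_C _ _).mul ((isHomogeneous_X _ _).mul (isHomogeneous_C _ _))
  simpa using this

lemma coeff_extract (c : Finset (Fin N) → K) (T : Finset (Fin N)) (k₀ : Fin N) (hk₀ : k₀ ∈ Tᶜ)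
    (h : Dop (fun S => C (c S) : Finset (Fin N) → MvPolynomial (Fin N) K) T = 0) :
    c (insert k₀ T) = 0 := by
  have hco := congrArg (coeff (Finsupp.single k₀ 1)) h
  rw [Dop] at hco
  simp only [coeff_sum, coeff_zero] at hco
  have hterm : ∀ k ∈ Tᶜ, coeff (Finsupp.single k₀ 1)
      (C (sgn K k T) * (X k * C (c (insert k T))))
      = if k = k₀ then sgn K k T * c (insert k T) else 0 := by
    intro k _
    have hrw : (C (sgn K k T) * (X k * C (c (insert k T))) : MvPolynomial (Fin N) K)
        = C (sgn K k T * c (insert k T)) * X k := by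
      rw [map_mul]; ring
    rw [hrw, coeff_C_mul, coeff_X']
    by_cases hkk : k = k₀
    · subst hkk; rw [if_pos rfl, if_pos rfl, mul_one]
    · rw [if_neg (fun hh => hkk (by
        exact Finsupp.single_left_injective (one_ne_zero (α := ℕ)) hh)), if_neg hkk, mul_zero]
  rw [Finset.sum_congr rfl hterm, Finset.sum_ite_eq' Tᶜ k₀
    (fun k => sgn K k T * c (insert k T)), if_pos hk₀] at hco
  exact (mul_eq_zero.mp hco).resolve_left (sgn_ne_zero _ _)

/-! homogeneous-component lemmas -/

lemma hc_of_homog {f : MvPolynomial (Fin N) K} {t m : ℕ} (hf : f.IsHomogeneous t) :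
    homogeneousComponent m f = if m = t then f else 0 :=
  homogeneousComponent_of_mem ((mem_homogeneousSubmodule _ _).mpr hf)

lemma homog_zero_eq_C {f : MvPolynomial (Fin N) K} (hf : f.IsHomogeneous 0) :
    f = C (constantCoeff f) := by
  have h0 := hc_of_homog (m := 0) hf
  rw [if_pos rfl] at h0
  conv_lhs => rw [← h0]
  rw [homogeneousComponent_zero]
  simp [constantCoeff_eq]

lemma homog_zero_cc_eq_zero {f : MvPolynomial (Fin N) K} (hf : f.IsHomogeneous 0)
    (hc : constantCoeff f = 0) : f = 0 := by
  rw [homog_zero_eq_C hf, hc, map_zero]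

lemma hc_mul_homog {w g : MvPolynomial (Fin N) K} {t m : ℕ} (hg : g.IsHomogeneous t) :
    homogeneousComponent m (w * g)
      = if t ≤ m then homogeneousComponent (m - t) w * g else 0 := by
  conv_lhs => rw [← sum_homogeneousComponent w]
  rw [Finset.sum_mul, map_sum]
  have hterm : ∀ d, homogeneousComponent m (homogeneousComponent d w * g)
      = if d + t = m then homogeneousComponent d w * g else 0 := by
    intro d
    have : (homogeneousComponent d w * g).IsHomogeneous (d + t) :=
      (homogeneousComponent_isHomogeneous d w).mul hg
    rw [hc_of_homog this]
    simp [eq_comm]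
  rw [Finset.sum_congr rfl (fun d _ => hterm d)]
  by_cases h : t ≤ m
  · rw [if_pos h]
    have hcond : ∀ d, (d + t = m) = (d = m - t) := by
      intro d; apply propext; omega
    simp only [hcond]
    rw [Finset.sum_ite_eq' (Finset.range (w.totalDegree + 1))
      (m - t) (fun d => homogeneousComponent d w * g)]
    by_cases hmem : m - t ∈ Finset.range (w.totalDegree + 1)
    · rw [if_pos hmem]
    · rw [if_neg hmem]
      have : homogeneousComponent (m - t) w = 0 := by
        apply homogeneousComponent_eq_zero
        simp at hmem; omega
      rw [this, zero_mul]
  · rw [if_neg h]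
    apply Finset.sum_eq_zero
    intro d _
    rw [if_neg (by omega)]

/-- The truncation lemma. -/
lemma trunc {ι : Type} [Fintype ι] (g : ι → MvPolynomial (Fin N) K) (t : ι → ℕ)
    (hg : ∀ i, (g i).IsHomogeneous (t i)) (w : ι → MvPolynomial (Fin N) K)
    {m : ℕ} {b : MvPolynomial (Fin N) K} (hb : b.IsHomogeneous m)
    (hw : ∑ i, w i * g i = b) :
    ∑ i, (if t i ≤ m then homogeneousComponent (m - t i) (w i) else 0) * g i = b := by
  have := congrArg (homogeneousComponent m) hw
  rw [map_sum, hc_of_homog hb, if_pos rfl] at this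
  rw [← this]
  apply Finset.sum_congr rfl
  intro i _
  rw [hc_mul_homog (hg i)]
  split_ifs with h
  · rfl
  · rw [zero_mul]

/-! degree-one polynomials as linear forms -/

lemma finsupp_degree_one {d : Fin N →₀ ℕ} (h : d.degree = 1) :
    ∃ k, d = Finsupp.single k 1 := by
  have hd : d ≠ 0 := by
    intro h0; rw [h0] at h; simp [map_zero] at h
  obtain ⟨k, hk⟩ := Finsupp.ne_iff.mp hd
  simp only [Finsupp.coe_zero, Pi.zero_apply] at hk
  have hks : k ∈ d.support := Finsupp.mem_support_iff.mpr hk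
  refine ⟨k, ?_⟩
  have hsum : d k + ∑ i ∈ d.support.erase k, d i = 1 := by
    rw [Finset.add_sum_erase _ _ hks]; exact h
  have hdk : d k = 1 := by omega
  have hrest : ∀ j ∈ d.support.erase k, d j = 0 := by
    intro j hj
    by_contra hne
    have h1 : 1 ≤ d j := Nat.one_le_iff_ne_zero.mpr hne
    have : d j ≤ ∑ i ∈ d.support.erase k, d i := Finset.single_le_sum (fun _ _ => Nat.zero_le _) hj
    omega
  ext j
  by_cases hjk : j = k
  · subst hjk; simp [hdk]
  · rw [Finsupp.single_apply, if_neg (fun hh => hjk hh.symm)]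
    by_cases hjs : j ∈ d.support
    · exact hrest j (Finset.mem_erase.mpr ⟨hjk, hjs⟩)
    · simpa using hjs

lemma homog_one_rep {f : MvPolynomial (Fin N) K} (hf : f.IsHomogeneous 1) :
    f = ∑ k, C (coeff (Finsupp.single k 1) f) * X k := by
  ext d
  rw [coeff_sum]
  by_cases hd : d.degree = 1
  · obtain ⟨k, rfl⟩ := finsupp_degree_one hd
    rw [Finset.sum_eq_single k]
    · rw [coeff_C_mul, coeff_X', if_pos rfl, mul_one]
    · intro j _ hjk
      rw [coeff_C_mul, coeff_X', if_neg (fun hh => hjk (by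
        have := Finsupp.single_left_injective (one_ne_zero (α := ℕ)) hh; exact this)), mul_zero]
    · intro h; exact absurd (Finset.mem_univ k) h
  · rw [hf.coeff_eq_zero hd]
    symm
    apply Finset.sum_eq_zero
    intro k _
    rw [coeff_C_mul, coeff_X', if_neg (fun hh => hd (by
      rw [← hh]; rw [Finsupp.degree_single])),
      mul_zero]

end Aux

section GeomAux

open Finset

variable {n : ℕ}

lemma mem_vanishingIdeal_iff {m : ℕ} {Γ : Set (Projectivization K (Fin m → K))}
    {f : MvPolynomial (Fin m) K} :
    f ∈ vanishingIdeal Γ ↔ ∀ P ∈ Γ, ∀ (v : Fin m → K) (hv : v ≠ 0),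
      Projectivization.mk K v hv = P → MvPolynomial.eval v f = 0 := Iff.rfl

/-- The linear form as a polynomial. -/
def linPoly (φ : Module.Dual K (Fin (n+1) → K)) : MvPolynomial (Fin (n+1)) K :=
  ∑ k, C (φ (Pi.single k 1)) * X k

lemma eval_linPoly (φ : Module.Dual K (Fin (n+1) → K)) (v : Fin (n+1) → K) :
    eval v (linPoly φ) = φ v := by
  rw [linPoly, map_sum, LinearMap.pi_apply_eq_sum_univ φ v]
  apply Finset.sum_congr rfl
  intro k _
  rw [eval_mul, eval_C, eval_X, smul_eq_mul]
  have : (Pi.single k 1 : Fin (n+1) → K) = (fun j => if k = j then 1 else 0) := by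
    ext j; rw [Pi.single_apply]; simp [eq_comm]
  rw [this]
  ring

lemma linPoly_isHomogeneous (φ : Module.Dual K (Fin (n+1) → K)) :
    (linPoly φ).IsHomogeneous 1 := by
  apply IsHomogeneous.sum
  intro k _
  simpa using (isHomogeneous_C _ (φ (Pi.single k 1))).mul (isHomogeneous_X _ k)

/-- any representative of P is a unit multiple of P.rep -/
lemma rep_of_mk {P : Projectivization K (Fin (n+1) → K)} {v : Fin (n+1) → K} {hv : v ≠ 0}
    (h : Projectivization.mk K v hv = P) : ∃ a : Kˣ, v = (a : K) • P.rep := by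
  rw [← Projectivization.mk_rep P, Projectivization.mk_eq_mk_iff] at h
  obtain ⟨a, ha⟩ := h
  exact ⟨a, by rw [← ha]; rfl⟩

variable [DecidableEq (Projectivization K (Fin (n + 1) → K))]
    (Γ₁ : Finset (Projectivization K (Fin (n + 1) → K)))
    (P₀ : Projectivization K (Fin (n + 1) → K))
    (φ : Module.Dual K (Fin (n + 1) → K))

/-- A degree-1 homogeneous polynomial in the vanishing ideal is zero. -/
lemma no_linear (hφ : φ ≠ 0)
    (hΓ₁ : ∀ P ∈ Γ₁, φ P.rep = 0) (hP₀ : φ P₀.rep ≠ 0)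
    (hspan : ∀ ψ : Module.Dual K (Fin (n + 1) → K),
      (∀ P ∈ Γ₁, ψ P.rep = 0) → ∃ c : K, ψ = c • φ)
    {f : MvPolynomial (Fin (n+1)) K}
    (hf : f ∈ vanishingIdeal
      ((insert P₀ Γ₁ : Finset _) : Set (Projectivization K (Fin (n+1) → K))))
    (h1 : f.IsHomogeneous 1) : f = 0 := by
  classical
  set c : Fin (n+1) → K := fun k => coeff (Finsupp.single k 1) f with hc
  set ψ : Module.Dual K (Fin (n+1) → K) := ∑ k, c k • (LinearMap.proj k) with hψ
  have hψv : ∀ v, ψ v = eval v f := by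
    intro v
    rw [hψ]
    conv_rhs => rw [homog_one_rep h1]
    rw [map_sum]
    simp only [LinearMap.sum_apply, LinearMap.smul_apply, LinearMap.proj_apply,
      smul_eq_mul, eval_mul, eval_C, eval_X]
    rfl
  have hevalzero : ∀ P ∈ insert P₀ Γ₁, eval P.rep f = 0 := by
    intro P hP
    exact hf P (by exact_mod_cast hP) P.rep P.rep_nonzero (Projectivization.mk_rep P)
  have hψΓ₁ : ∀ P ∈ Γ₁, ψ P.rep = 0 := by
    intro P hP
    rw [hψv]
    exact hevalzero P (Finset.mem_insert_of_mem hP)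
  obtain ⟨a, ha⟩ := hspan ψ hψΓ₁
  have hψP₀ : ψ P₀.rep = 0 := by
    rw [hψv]
    exact hevalzero P₀ (Finset.mem_insert_self _ _)
  have ha0 : a = 0 := by
    rw [ha] at hψP₀
    simp only [LinearMap.smul_apply, smul_eq_mul] at hψP₀
    exact (mul_eq_zero.mp hψP₀).resolve_right hP₀
  have hψ0 : ψ = 0 := by rw [ha, ha0, zero_smul]
  have hck : ∀ k, c k = 0 := by
    intro k
    have h1' : ψ (Pi.single k 1) = 0 := by rw [hψ0]; rfl
    rw [hψ] at h1'
    simp only [LinearMap.sum_apply, LinearMap.smul_apply, LinearMap.proj_apply,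
      smul_eq_mul] at h1'
    rw [Finset.sum_eq_single k] at h1'
    · rw [Pi.single_eq_same, mul_one] at h1'; exact h1'
    · intro j _ hjk; rw [Pi.single_eq_of_ne (fun hh => hjk hh) 1, mul_zero]
    · intro h; exact absurd (Finset.mem_univ k) h
  rw [homog_one_rep h1]
  apply Finset.sum_eq_zero
  intro k _
  rw [show coeff (Finsupp.single k 1) f = c k from rfl, hck k, map_zero, zero_mul]

/-- the quadratic elements of the ideal -/
lemma quad_mem (hΓ₁ : ∀ P ∈ Γ₁, φ P.rep = 0) (a b : Fin (n+1)) :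
    (C (P₀.rep b) * X a - C (P₀.rep a) * X b) * linPoly φ
      ∈ vanishingIdeal ((insert P₀ Γ₁ : Finset _) : Set (Projectivization K (Fin (n+1) → K))) := by
  intro P hP v hv hmk
  obtain ⟨t, ht⟩ := rep_of_mk hmk
  rw [eval_mul, eval_linPoly]
  simp only [map_sub, eval_mul, eval_C, eval_X]
  have hP' : P ∈ insert P₀ Γ₁ := by exact_mod_cast hP
  rcases Finset.mem_insert.mp hP' with h | h
  · rw [h] at ht
    rw [ht]
    simp only [Pi.smul_apply, smul_eq_mul]
    ring
  · have : φ v = 0 := by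
      rw [ht, map_smul, smul_eq_mul, hΓ₁ P h, mul_zero]
    rw [this, mul_zero]

lemma linPoly_ne_zero (hP₀ : φ P₀.rep ≠ 0) : linPoly φ ≠ 0 := by
  intro h
  apply hP₀
  rw [← eval_linPoly φ P₀.rep, h, map_zero]

lemma hyp_insert_eq (hφ : φ ≠ 0)
    (hΓ₁ : ∀ P ∈ Γ₁, φ P.rep = 0) (hP₀ : φ P₀.rep ≠ 0)
    (hspan : ∀ ψ : Module.Dual K (Fin (n + 1) → K),
      (∀ P ∈ Γ₁, ψ P.rep = 0) → ∃ c : K, ψ = c • φ) :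
    hyp (insert P₀ Γ₁) = Γ₁.card := by
  classical
  have hP₀Γ₁ : P₀ ∉ Γ₁ := fun h => hP₀ (hΓ₁ P₀ h)
  have hcard : (insert P₀ Γ₁).card = Γ₁.card + 1 := Finset.card_insert_of_notMem hP₀Γ₁
  unfold hyp
  have hmem : Γ₁.card ∈ {k | ∃ ψ : Module.Dual K (Fin (n+1) → K), ψ ≠ 0 ∧
      k = ((insert P₀ Γ₁).filter fun P => ψ P.rep = 0).card} := by
    refine ⟨φ, hφ, ?_⟩
    have : (insert P₀ Γ₁).filter (fun P => φ P.rep = 0) = Γ₁ := by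
      rw [Finset.filter_insert, if_neg hP₀]
      exact Finset.filter_true_of_mem hΓ₁
    rw [this]
  have hub : ∀ k ∈ {k | ∃ ψ : Module.Dual K (Fin (n+1) → K), ψ ≠ 0 ∧
      k = ((insert P₀ Γ₁).filter fun P => ψ P.rep = 0).card}, k ≤ Γ₁.card := by
    rintro k ⟨ψ, hψ, rfl⟩
    by_contra hgt
    push_neg at hgt
    have hle : ((insert P₀ Γ₁).filter fun P => ψ P.rep = 0).card ≤ (insert P₀ Γ₁).card :=
      Finset.card_filter_le _ _
    have heq : ((insert P₀ Γ₁).filter fun P => ψ P.rep = 0) = insert P₀ Γ₁ := by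
      apply Finset.eq_of_subset_of_card_le (Finset.filter_subset _ _)
      omega
    have hall : ∀ P ∈ insert P₀ Γ₁, ψ P.rep = 0 := by
      intro P hP
      have hPf : P ∈ (insert P₀ Γ₁).filter fun P => ψ P.rep = 0 := by
        rw [heq]; exact hP
      exact (Finset.mem_filter.mp hPf).2
    obtain ⟨c, hc⟩ := hspan ψ (fun P hP => hall P (Finset.mem_insert_of_mem hP))
    have : c * φ P₀.rep = 0 := by
      have := hall P₀ (Finset.mem_insert_self _ _)
      rw [hc] at this
      simpa using this
    have hc0 : c = 0 := (mul_eq_zero.mp this).resolve_right hP₀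
    apply hψ
    rw [hc, hc0, zero_smul]
  apply le_antisymm
  · exact csSup_le ⟨_, hmem⟩ hub
  · exact le_csSup ⟨Γ₁.card, hub⟩ hmem

lemma minDist_insert_eq_one (hφ : φ ≠ 0)
    (hΓ₁ : ∀ P ∈ Γ₁, φ P.rep = 0) (hP₀ : φ P₀.rep ≠ 0)
    (hspan : ∀ ψ : Module.Dual K (Fin (n + 1) → K),
      (∀ P ∈ Γ₁, ψ P.rep = 0) → ∃ c : K, ψ = c • φ) :
    minDist (insert P₀ Γ₁) = 1 := by
  have hP₀Γ₁ : P₀ ∉ Γ₁ := fun h => hP₀ (hΓ₁ P₀ h)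
  have hcard : (insert P₀ Γ₁).card = Γ₁.card + 1 := Finset.card_insert_of_notMem hP₀Γ₁
  unfold minDist
  rw [hyp_insert_eq Γ₁ P₀ φ hφ hΓ₁ hP₀ hspan, hcard]
  omega

end GeomAux

section ResAux

open Finset

variable {N : ℕ} {I : Ideal (MvPolynomial (Fin N) K)}

lemma cc_range_zero {a b : ℕ} (M : Matrix (Fin a) (Fin b) (MvPolynomial (Fin N) K))
    (hM : ∀ i j, constantCoeff (M i j) = 0) {v : Fin a → MvPolynomial (Fin N) K}
    (hv : v ∈ LinearMap.range M.mulVecLin) : ∀ i, constantCoeff (v i) = 0 := by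
  obtain ⟨w, rfl⟩ := hv
  intro i
  have hexp : (M.mulVecLin w) i = ∑ j, M i j * w j := rfl
  rw [hexp, map_sum]
  apply Finset.sum_eq_zero
  intro j _
  rw [map_mul, hM i j, zero_mul]

lemma gen_ne_zero (res : MinFreeRes N K I) (i : Fin (res.rk 1)) : res.gen i ≠ 0 := by
  intro h
  classical
  have hsum : ∑ j, (Pi.single i (1 : MvPolynomial (Fin N) K)
      : Fin (res.rk 1) → MvPolynomial (Fin N) K) j * res.gen j = 0 := by
    rw [Finset.sum_eq_single i]
    · rw [Pi.single_eq_same, one_mul, h]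
    · intro j _ hji; rw [Pi.single_eq_of_ne hji, zero_mul]
    · intro habs; exact absurd (Finset.mem_univ i) habs
  have hr := (res.exact_one _).mp hsum
  have := cc_range_zero (res.mat 0) (res.mat_min 0) hr i
  rw [Pi.single_eq_same, map_one] at this
  exact one_ne_zero this

lemma col_nonzero (res : MinFreeRes N K I) (j : ℕ) (i' : Fin (res.rk (j + 2))) :
    ∃ i, res.mat j i i' ≠ 0 := by
  classical
  by_contra hall
  push_neg at hall
  have hker : (res.mat j).mulVecLin (Pi.single i' (1 : MvPolynomial (Fin N) K)) = 0 := by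
    rw [Matrix.mulVecLin_apply, Matrix.mulVec_single]
    funext i
    simp [hall i]
  have hmem : Pi.single i' (1 : MvPolynomial (Fin N) K) ∈
      LinearMap.ker (res.mat j).mulVecLin := hker
  rw [res.exact_rest j] at hmem
  have := cc_range_zero (res.mat (j+1)) (res.mat_min (j+1)) hmem i'
  rw [Pi.single_eq_same, map_one] at this
  exact one_ne_zero this

lemma twist_ge (res : MinFreeRes N K I) (h1 : ∀ i, 2 ≤ res.twist 1 i) :
    ∀ p, ∀ i : Fin (res.rk (p + 1)), p + 2 ≤ res.twist (p + 1) i := by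
  intro p
  induction p with
  | zero => exact fun i => h1 i
  | succ p ih =>
    intro i'
    obtain ⟨i, hne⟩ := col_nonzero res p i'
    rcases res.mat_hom p i i' with h0 | ⟨d, hd, hsum⟩
    · exact absurd h0 hne
    · have hd1 : 1 ≤ d := by
        by_contra hd0
        push_neg at hd0
        interval_cases d
        exact hne (homog_zero_cc_eq_zero hd (res.mat_min p i i'))
      have := ih i
      have hcast : res.twist (p + 1 + 1) i' = res.twist (p + 2) i' := rfl
      rw [hcast]
      omega

/-- The kernel condition at stage `s` of the resolution. -/
def KerP (res : MinFreeRes N K I) :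
    (s : ℕ) → (Fin (res.rk (s + 1)) → MvPolynomial (Fin N) K) → Prop
  | 0, v => ∑ i, v i * res.gen i = 0
  | (s + 1), v => (res.mat s).mulVecLin v = 0

lemma lift_KerP (res : MinFreeRes N K I) (s : ℕ)
    (v : Fin (res.rk (s + 1)) → MvPolynomial (Fin N) K) (hv : KerP res s v) :
    ∃ w, (res.mat s).mulVecLin w = v := by
  cases s with
  | zero =>
    obtain ⟨w, hw⟩ := (res.exact_one v).mp hv
    exact ⟨w, hw⟩
  | succ s =>
    have hmem : v ∈ LinearMap.ker (res.mat s).mulVecLin := hv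
    rw [res.exact_rest s] at hmem
    obtain ⟨w, hw⟩ := hmem
    exact ⟨w, hw⟩

end ResAux

section Socle

open Finset

variable {n : ℕ}

lemma exists_socle [CharZero K]
    [DecidableEq (Projectivization K (Fin (n + 1) → K))]
    (hn : 2 ≤ n)
    (Γ₁ : Finset (Projectivization K (Fin (n + 1) → K)))
    (P₀ : Projectivization K (Fin (n + 1) → K))
    (φ : Module.Dual K (Fin (n + 1) → K))
    (hΓ₁ : ∀ P ∈ Γ₁, φ P.rep = 0)
    (hP₀ : φ P₀.rep ≠ 0)
    (res : MinFreeRes (n + 1) K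
      (vanishingIdeal ((insert P₀ Γ₁ : Finset (Projectivization K (Fin (n + 1) → K))) : Set (Projectivization K (Fin (n + 1) → K)))))
    (h1 : ∀ i, 2 ≤ res.twist 1 i) :
    ∃ i : Fin (res.rk n), res.twist n i = n + 1 := by
  classical
  have htge := twist_ge res h1
  set F := linPoly φ with hFdef
  have hFhom : F.IsHomogeneous 1 := linPoly_isHomogeneous φ
  have hFne : F ≠ 0 := linPoly_ne_zero P₀ φ hP₀
  set c₀ : Finset (Fin (n+1)) → MvPolynomial (Fin (n+1)) K :=
    fun S => ∑ j ∈ Sᶜ, C (sgn K j S * P₀.rep j) * F with hc₀def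
  have hc₀hom : ∀ S, (c₀ S).IsHomogeneous 1 := by
    intro S
    apply IsHomogeneous.sum
    intro j _
    simpa using (isHomogeneous_C _ (sgn K j S * P₀.rep j)).mul hFhom
  have hGhom : ∀ T, (Dop c₀ T).IsHomogeneous 2 := by
    intro T
    apply IsHomogeneous.sum
    intro k _
    have := (isHomogeneous_C _ (sgn K k T)).mul
      ((isHomogeneous_X K k).mul (hc₀hom (insert k T)))
    simpa using this
  have hGpair : ∀ (T : Finset (Fin (n+1))) (a b : Fin (n+1)), a ≠ b → Tᶜ = {a, b} →
      Dop c₀ T = C (sgn K a T * sgn K b (insert a T)) *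
        ((C (P₀.rep b) * X a - C (P₀.rep a) * X b) * F) := by
    intro T a b hab hTc
    have haT : a ∉ T := by
      have : a ∈ Tᶜ := by rw [hTc]; exact Finset.mem_insert_self a {b}
      simpa [Finset.mem_compl] using this
    have hbT : b ∉ T := by
      have : b ∈ Tᶜ := by rw [hTc]; simp
      simpa [Finset.mem_compl] using this
    have hca : c₀ (insert a T) = C (sgn K b (insert a T) * P₀.rep b) * F := by
      rw [hc₀def]
      simp only []
      rw [Finset.compl_insert, hTc]
      have herase : ({a, b} : Finset (Fin (n+1))).erase a = {b} := by
        rw [show ({a, b} : Finset (Fin (n+1))) = insert a {b} from rfl,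
          Finset.erase_insert (by simp [hab])]
      rw [herase, Finset.sum_singleton]
    have hcb : c₀ (insert b T) = C (sgn K a (insert b T) * P₀.rep a) * F := by
      rw [hc₀def]
      simp only []
      rw [Finset.compl_insert, hTc]
      have herase : ({a, b} : Finset (Fin (n+1))).erase b = {a} := by
        rw [Finset.pair_comm a b, show ({b, a} : Finset (Fin (n+1))) = insert b {a} from rfl,
          Finset.erase_insert (by simp [Ne.symm hab])]
      rw [herase, Finset.sum_singleton]
    rw [show Dop c₀ T = ∑ k ∈ Tᶜ, C (sgn K k T) * (X k * c₀ (insert k T)) from rfl, hTc,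
      Finset.sum_pair hab, hca, hcb]
    have h4 : C (sgn K b T) * C (sgn K a (insert b T))
        = - (C (sgn K a T) * C (sgn K b (insert a T)) : MvPolynomial (Fin (n+1)) K) := by
      rw [← C_mul, ← C_mul, sgn_anticomm T hbT haT (Ne.symm hab), map_neg]
    simp only [map_mul]
    linear_combination (X b * C (P₀.rep a) * F) * h4
  have hGmem : ∀ T : Finset (Fin (n+1)), T.card + 1 = n →
      Dop c₀ T ∈ vanishingIdeal
        ((insert P₀ Γ₁ : Finset (Projectivization K (Fin (n + 1) → K)))
          : Set (Projectivization K (Fin (n + 1) → K))) := by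
    intro T hT
    have hTc2 : Tᶜ.card = 2 := by
      rw [Finset.card_compl, Fintype.card_fin]; omega
    obtain ⟨a, b, hab, hTc⟩ := Finset.card_eq_two.mp hTc2
    rw [hGpair T a b hab hTc]
    exact Ideal.mul_mem_left _ _ (quad_mem Γ₁ P₀ φ hΓ₁ a b)
  have main : ∀ s, s + 1 ≤ n →
      ∃ γ : Fin (res.rk (s + 1)) → Finset (Fin (n + 1)) → K,
        (∀ i S, γ i S ≠ 0 → res.twist (s + 1) i = s + 2 ∧ S.card + s + 1 = n) ∧
        γ ≠ 0 ∧
        (∀ T : Finset (Fin (n + 1)), T.card + s + 2 = n →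
          KerP res s (fun i => Dop (fun S => C (γ i S)) T)) := by
    intro s
    induction s with
    | zero =>
      intro hs
      have hmem : ∀ T : Finset (Fin (n+1)), T.card + 1 = n →
          ∃ wv : Fin (res.rk 1) → MvPolynomial (Fin (n+1)) K,
            ∑ i, wv i * res.gen i = Dop c₀ T := by
        intro T hT
        have : Dop c₀ T ∈ Ideal.span (Set.range res.gen) := by
          rw [res.gen_span]; exact hGmem T hT
        exact Ideal.mem_span_range_iff_exists_fun.mp this
      choose w hw using hmem
      set γ : Fin (res.rk 1) → Finset (Fin (n+1)) → K := fun i S =>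
        if h : S.card + 1 = n then
          (if res.twist 1 i = 2 then coeff 0 (w S h i) else 0) else 0 with hγdef
      have hE : ∀ T, ∀ hT : T.card + 1 = n,
          ∑ i, C (γ i T) * res.gen i = Dop c₀ T := by
        intro T hT
        have htr := trunc res.gen (res.twist 1) res.gen_hom (w T hT) (hGhom T) (hw T hT)
        rw [← htr]
        apply Finset.sum_congr rfl
        intro i _
        congr 1
        by_cases h2 : res.twist 1 i = 2
        · rw [hγdef]
          simp only [dif_pos hT, if_pos h2, h2, Nat.sub_self, homogeneousComponent_zero]
          simp
        · rw [hγdef]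
          simp only [dif_pos hT, if_neg h2, map_zero]
          rw [if_neg (by have := h1 i; omega)]
      have hSupp : ∀ i S, γ i S ≠ 0 → res.twist 1 i = 2 ∧ S.card + 1 = n := by
        intro i S h
        rw [hγdef] at h
        simp only [] at h
        by_cases hc : S.card + 1 = n
        · rw [dif_pos hc] at h
          by_cases h2 : res.twist 1 i = 2
          · exact ⟨h2, hc⟩
          · rw [if_neg h2] at h; exact absurd rfl h
        · rw [dif_neg hc] at h; exact absurd rfl h
      have hNZ : γ ≠ 0 := by
        intro h0
        have hG0 : ∀ T, ∀ _ : T.card + 1 = n, Dop c₀ T = 0 := by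
          intro T hT
          rw [← hE T hT]
          apply Finset.sum_eq_zero
          intro i _
          rw [h0]
          simp
        have hu : P₀.rep ≠ 0 := Projectivization.rep_nonzero P₀
        have hj : ∃ j, P₀.rep j ≠ 0 := by
          by_contra hall; push_neg at hall
          exact hu (funext fun j => hall j)
        obtain ⟨j, hj⟩ := hj
        have hk : ∃ k : Fin (n+1), k ≠ j := by
          haveI : Nontrivial (Fin (n+1)) := Fin.nontrivial_iff_two_le.mpr (by omega)
          exact exists_ne j
        obtain ⟨k, hk⟩ := hk
        set T₀ := ({j, k} : Finset (Fin (n+1)))ᶜ with hT₀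
        have hcompl : T₀ᶜ = {j, k} := by rw [hT₀, compl_compl]
        have hT₀card : T₀.card + 1 = n := by
          rw [hT₀, Finset.card_compl, Finset.card_pair (Ne.symm hk), Fintype.card_fin]
          omega
        have h00 := hG0 T₀ hT₀card
        rw [hGpair T₀ j k (Ne.symm hk) hcompl] at h00
        rcases mul_eq_zero.mp h00 with h | h
        · rw [C_eq_zero] at h
          exact absurd h (mul_ne_zero (sgn_ne_zero _ _) (sgn_ne_zero _ _))
        rcases mul_eq_zero.mp h with h | h
        · have hcoeff := congrArg (coeff (Finsupp.single k 1)) h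
          rw [coeff_sub, coeff_zero, coeff_C_mul, coeff_C_mul, coeff_X', coeff_X',
            if_pos rfl,
            if_neg (fun hh : (Finsupp.single j 1 : Fin (n+1) →₀ ℕ) = Finsupp.single k 1 =>
              hk (Finsupp.single_left_injective (one_ne_zero (α := ℕ)) hh).symm)] at hcoeff
          simp at hcoeff
          exact hj hcoeff
        · exact hFne h
      refine ⟨γ, hSupp, hNZ, ?_⟩
      intro T hT
      show ∑ i, Dop (fun S => C (γ i S)) T * res.gen i = 0
      have hcomm : ∑ i, Dop (fun S => C (γ i S)) T * res.gen i
          = ∑ i, res.gen i * Dop (fun S => C (γ i S)) T :=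
        Finset.sum_congr rfl fun i _ => mul_comm _ _
      rw [hcomm, Dop_linear]
      have hcongr : Dop (fun S => ∑ i, res.gen i * C (γ i S)) T = Dop (Dop c₀) T := by
        apply Dop_congr
        intro k hk
        have hcard : (insert k T).card + 1 = n := by
          rw [Finset.card_insert_of_notMem (Finset.mem_compl.mp hk)]
          omega
        show ∑ i, res.gen i * C (γ i (insert k T)) = Dop c₀ (insert k T)
        rw [← hE (insert k T) hcard]
        exact Finset.sum_congr rfl fun i _ => mul_comm _ _
      rw [hcongr, Dop_Dop]
    | succ s ih =>
      intro hs1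
      have hs : s + 2 ≤ n := hs1
      obtain ⟨γ, hSuppγ, hNZγ, hDKγ⟩ := ih (by omega)
      have hlift : ∀ T : Finset (Fin (n+1)), ∀ _ : T.card + s + 2 = n,
          ∃ wv : Fin (res.rk (s + 2)) → MvPolynomial (Fin (n+1)) K,
            (res.mat s).mulVecLin wv = (fun i => Dop (fun S => C (γ i S)) T) := by
        intro T hT
        exact lift_KerP res s _ (hDKγ T hT)
      choose w hw using hlift
      set γ' : Fin (res.rk (s + 2)) → Finset (Fin (n+1)) → K := fun i' S =>
        if h : S.card + s + 2 = n then
          (if res.twist (s + 2) i' = s + 3 then coeff 0 (w S h i') else 0) else 0 with hγ'def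
      have hrow : ∀ T : Finset (Fin (n+1)), ∀ hT : T.card + s + 2 = n,
          ∀ i : Fin (res.rk (s + 1)),
          ∑ i', w T hT i' * res.mat s i i' = Dop (fun S => C (γ i S)) T := by
        intro T hT i
        have hcf := congrFun (hw T hT) i
        rw [show ((res.mat s).mulVecLin (w T hT)) i = ∑ i', res.mat s i i' * w T hT i'
          from rfl] at hcf
        rw [← hcf]
        exact Finset.sum_congr rfl fun i' _ => mul_comm _ _
      have hE' : ∀ T : Finset (Fin (n+1)), ∀ hT : T.card + s + 2 = n,
          ∀ i : Fin (res.rk (s + 1)),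
          ∑ i', res.mat s i i' * C (γ' i' T) = Dop (fun S => C (γ i S)) T := by
        intro T hT i
        by_cases h2 : res.twist (s + 1) i = s + 2
        · have hb : (Dop (fun S => C (γ i S)) T).IsHomogeneous 1 := Dop_homog_one _ T
          have hg : ∀ i', (res.mat s i i').IsHomogeneous
              (res.twist (s + 2) i' - res.twist (s + 1) i) := by
            intro i'
            rcases res.mat_hom s i i' with h0 | ⟨d, hd, hsum⟩
            · rw [h0]; exact isHomogeneous_zero _ _ _
            · have hdt : d = res.twist (s + 2) i' - res.twist (s + 1) i := by omega
              rwa [← hdt]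
          have htr := trunc (fun i' => res.mat s i i')
            (fun i' => res.twist (s + 2) i' - res.twist (s + 1) i) hg (w T hT) hb
            (hrow T hT i)
          rw [← htr]
          apply Finset.sum_congr rfl
          intro i' _
          beta_reduce
          by_cases h3 : res.twist (s + 2) i' = s + 3
          · have ht1 : res.twist (s + 2) i' - res.twist (s + 1) i = 1 := by omega
            rw [ht1, if_pos le_rfl, Nat.sub_self, homogeneousComponent_zero]
            rw [hγ'def]
            simp only [dif_pos hT, if_pos h3]
            exact mul_comm _ _
          · have h4 : s + 3 ≤ res.twist (s + 2) i' := htge (s + 1) i'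
            have h5 : ¬ (res.twist (s + 2) i' - res.twist (s + 1) i ≤ 1) := by omega
            rw [if_neg h5, zero_mul, hγ'def]
            simp only [dif_pos hT, if_neg h3, map_zero, mul_zero]
        · have hbz : Dop (fun S => C (γ i S)) T = 0 := by
            apply Finset.sum_eq_zero
            intro k _
            beta_reduce
            have hz : γ i (insert k T) = 0 := by
              by_contra hne
              exact h2 (hSuppγ i _ hne).1
            rw [hz, map_zero, mul_zero, mul_zero]
          rw [hbz]
          apply Finset.sum_eq_zero
          intro i' _
          by_cases h3 : res.twist (s + 2) i' = s + 3
          · have h5 : s + 2 ≤ res.twist (s + 1) i := htge s i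
            rcases res.mat_hom s i i' with h0 | ⟨d, hd, hsum⟩
            · rw [h0, zero_mul]
            · have hd0 : d = 0 := by omega
              rw [hd0] at hd
              rw [homog_zero_cc_eq_zero hd (res.mat_min s i i'), zero_mul]
          · rw [hγ'def]
            simp only [dif_pos hT, if_neg h3, map_zero, mul_zero]
      have hSupp' : ∀ i' S, γ' i' S ≠ 0 →
          res.twist (s + 2) i' = s + 3 ∧ S.card + s + 2 = n := by
        intro i' S h
        rw [hγ'def] at h
        simp only [] at h
        by_cases hc : S.card + s + 2 = n
        · rw [dif_pos hc] at h
          by_cases h3 : res.twist (s + 2) i' = s + 3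
          · exact ⟨h3, hc⟩
          · rw [if_neg h3] at h; exact absurd rfl h
        · rw [dif_neg hc] at h; exact absurd rfl h
      have hNZ' : γ' ≠ 0 := by
        intro h0
        have hb0 : ∀ T : Finset (Fin (n+1)), ∀ hT : T.card + s + 2 = n,
            ∀ i, Dop (fun S => C (γ i S)) T = 0 := by
          intro T hT i
          rw [← hE' T hT i]
          apply Finset.sum_eq_zero
          intro i' _
          rw [h0]
          simp
        apply hNZγ
        funext i S
        show γ i S = 0
        by_contra hne
        obtain ⟨h2, hcardS⟩ := hSuppγ i S hne
        have hSne : S.Nonempty := Finset.card_pos.mp (by omega)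
        obtain ⟨k, hkS⟩ := hSne
        have hT : (S.erase k).card + s + 2 = n := by
          rw [Finset.card_erase_of_mem hkS]
          have : 1 ≤ S.card := Finset.card_pos.mpr ⟨k, hkS⟩
          omega
        have hkc : k ∈ (S.erase k)ᶜ := Finset.mem_compl.mpr (Finset.notMem_erase k S)
        have hz := coeff_extract (fun S' => γ i S') (S.erase k) k hkc (hb0 (S.erase k) hT i)
        rw [Finset.insert_erase hkS] at hz
        exact hne hz
      refine ⟨γ', ?_, hNZ', ?_⟩
      · intro i' S h
        obtain ⟨hA, hB⟩ := hSupp' i' S h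
        exact ⟨hA, by omega⟩
      · intro T hT'
        have hT2 : T.card + s + 3 = n := by omega
        show (res.mat s).mulVecLin (fun i' => Dop (fun S => C (γ' i' S)) T) = 0
        funext i
        show ∑ i', res.mat s i i' * Dop (fun S => C (γ' i' S)) T = 0
        rw [Dop_linear (fun i' => res.mat s i i') (fun i' S => C (γ' i' S)) T]
        have hcongr : Dop (fun S => ∑ i', res.mat s i i' * C (γ' i' S)) T
            = Dop (Dop (fun S => C (γ i S))) T := by
          apply Dop_congr
          intro k hk
          have hcard : (insert k T).card + s + 2 = n := by
            rw [Finset.card_insert_of_notMem (Finset.mem_compl.mp hk)]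
            omega
          exact hE' (insert k T) hcard i
        rw [hcongr, Dop_Dop]
  obtain ⟨s, hsn⟩ : ∃ s, s + 1 = n := ⟨n - 1, by omega⟩
  obtain ⟨γ, hSupp, hNZ, -⟩ := main s (by omega)
  have hex : ∃ i S, γ i S ≠ 0 := by
    by_contra hall
    push_neg at hall
    exact hNZ (funext fun i => funext fun S => hall i S)
  obtain ⟨i, S, hiS⟩ := hex
  have hres : ∃ i : Fin (res.rk (s + 1)), res.twist (s + 1) i = s + 2 :=
    ⟨i, (hSupp i S hiS).1⟩
  rw [show s + 2 = n + 1 by omega] at hres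
  rw [hsn] at hres
  exact hres

end Socle

/-- If `Γ` consists of a set `Γ₁` of points lying on the
hyperplane `φ = 0` (and spanning it: any linear form vanishing on `Γ₁` is a
multiple of `φ`) together with one point `P₀` off that hyperplane, then
`d(Γ) = 1`, `a(Γ) = n + 1`, and `d(Γ) = A_n`. -/
theorem hyperplane_points_plus_one
    {K : Type} [Field K] [CharZero K] {n : ℕ} (hn : 2 ≤ n)
    [DecidableEq (Projectivization K (Fin (n + 1) → K))]
    (Γ₁ : Finset (Projectivization K (Fin (n + 1) → K)))
    (P₀ : Projectivization K (Fin (n + 1) → K))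
    (φ : Module.Dual K (Fin (n + 1) → K)) (hφ : φ ≠ 0)
    (hΓ₁ : ∀ P ∈ Γ₁, φ P.rep = 0)
    (hP₀ : φ P₀.rep ≠ 0)
    (hspan : ∀ ψ : Module.Dual K (Fin (n + 1) → K),
      (∀ P ∈ Γ₁, ψ P.rep = 0) → ∃ c : K, ψ = c • φ)
    (res : MinFreeRes (n + 1) K
      (vanishingIdeal ((insert P₀ Γ₁ : Finset (Projectivization K (Fin (n + 1) → K))) : Set (Projectivization K (Fin (n + 1) → K)))))
    (hlen : res.len = n) :
    minDist (insert P₀ Γ₁) = 1 ∧ res.aMin = n + 1 ∧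
      (minDist (insert P₀ Γ₁) : ℤ) = res.A := by
  classical
  have hminDist : minDist (insert P₀ Γ₁) = 1 :=
    minDist_insert_eq_one Γ₁ P₀ φ hφ hΓ₁ hP₀ hspan
  have h1 : ∀ i, 2 ≤ res.twist 1 i := by
    intro i
    have hne := gen_ne_zero res i
    have hhom := res.gen_hom i
    have hmem : res.gen i ∈ vanishingIdeal
        ((insert P₀ Γ₁ : Finset (Projectivization K (Fin (n + 1) → K)))
          : Set (Projectivization K (Fin (n + 1) → K))) := by
      have hmem0 : res.gen i ∈ Ideal.span (Set.range res.gen) :=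
        Ideal.subset_span ⟨i, rfl⟩
      rwa [res.gen_span] at hmem0
    by_contra hlt
    push_neg at hlt
    have h01 : res.twist 1 i = 0 ∨ res.twist 1 i = 1 := by omega
    rcases h01 with h | h
    · rw [h] at hhom
      exact hne (homog_zero_cc_eq_zero hhom (res.gen_min i))
    · rw [h] at hhom
      exact hne (no_linear Γ₁ P₀ φ hφ hΓ₁ hP₀ hspan hmem hhom)
  have htge := twist_ge res h1
  have hkey := exists_socle hn Γ₁ P₀ φ hΓ₁ hP₀ res h1
  obtain ⟨s, hsn⟩ : ∃ s, s + 1 = n := ⟨n - 1, by omega⟩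
  have hlb : ∀ i : Fin (res.rk (s + 1)), s + 2 ≤ res.twist (s + 1) i := htge s
  rw [show s + 2 = n + 1 by omega] at hlb
  rw [hsn] at hlb
  have hub' : ∃ i : Fin (res.rk res.len), res.twist res.len i = n + 1 := by
    rw [hlen]; exact hkey
  have hlb' : ∀ i : Fin (res.rk res.len), n + 1 ≤ res.twist res.len i := by
    rw [hlen]; exact hlb
  have haMin : res.aMin = n + 1 := by
    unfold MinFreeRes.aMin
    apply le_antisymm
    · obtain ⟨i, hi⟩ := hub'
      exact le_trans (Finset.inf'_le _ (Finset.mem_univ i)) (le_of_eq hi)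
    · apply Finset.le_inf'
      intro i _
      exact hlb' i
  refine ⟨hminDist, haMin, ?_⟩
  rw [hminDist]
  unfold MinFreeRes.A
  rw [haMin, hlen]
  push_cast
  ring

end PointsMinDist
end
end
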